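/- Let D be a directed acyclic multigraph with root r (every node reachable from r) and sink set W, and for each node v let λ(v) = (⌊log₂ π(r,v)⌋, ⌊log₂ π(v,W)⌋), where π(u,v) counts directed paths from u to v and π(v,W) = ∑_{w∈W} π(v,w). Then every path in D from r to a sink node contains at most 2·log₂ n(D) edges (u,v) with λ(u) ≠ λ(v), where n(D) = π(r,W). -/

import Mathlib

/-- A finite directed acyclic multigraph, given by a finite set of numbered edges `(u, i, v)`. -/
structure MultiDAG (V : Type*) [DecidableEq V] where
  E : Finset (V × ℕ × V)

variable {V : Type*} [DecidableEq V]

/-- `IsPath D u v p` : the list of edges `p` forms a directed path from `u` to `v` in `D`. -/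
def IsPath (D : MultiDAG V) : V → V → List (V × ℕ × V) → Prop
  | u, v, [] => u = v
  | u, v, e :: p => e ∈ D.E ∧ e.1 = u ∧ IsPath D e.2.2 v p

/-- `π(u,v)` : the number of directed paths from `u` to `v`. -/
noncomputable def pathCount (D : MultiDAG V) (u v : V) : ℕ :=
  {p : List (V × ℕ × V) | IsPath D u v p}.ncard

/-- A sink node: no outgoing edges. -/
def IsSink (D : MultiDAG V) (w : V) : Prop := ∀ e ∈ D.E, e.1 ≠ w

/-- `π(v,W)` : the number of directed paths from `v` to some sink node. -/
noncomputable def pathCountW (D : MultiDAG V) (v : V) : ℕ :=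
  {p : List (V × ℕ × V) | ∃ w, IsSink D w ∧ IsPath D v w p}.ncard

/-- `λ(v) = (⌊log₂ π(r,v)⌋, ⌊log₂ π(v,W)⌋)`. -/
noncomputable def lam (D : MultiDAG V) (r v : V) : ℕ × ℕ :=
  (Nat.log 2 (pathCount D r v), Nat.log 2 (pathCountW D v))

namespace Aux

variable {D : MultiDAG V}

lemma isPath_append {u v w : V} {p q : List (V × ℕ × V)}
    (h1 : IsPath D u v p) (h2 : IsPath D v w q) : IsPath D u w (p ++ q) := by
  induction p generalizing u with
  | nil => cases h1; simpa using h2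
  | cons e p ih => exact ⟨h1.1, h1.2.1, ih h1.2.2⟩

lemma isPath_split {u v : V} {p q : List (V × ℕ × V)}
    (h : IsPath D u v (p ++ q)) : ∃ m, IsPath D u m p ∧ IsPath D m v q := by
  induction p generalizing u with
  | nil => exact ⟨u, rfl, h⟩
  | cons e p ih =>
      obtain ⟨m, h1, h2⟩ := ih h.2.2
      exact ⟨m, ⟨h.1, h.2.1, h1⟩, h2⟩

lemma isPath_end_unique {u v v' : V} {p : List (V × ℕ × V)}
    (h : IsPath D u v p) (h' : IsPath D u v' p) : v = v' := by
  induction p generalizing u with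
  | nil => exact h.symm.trans h'
  | cons e p ih => exact ih h.2.2 h'.2.2

lemma isPath_mem_E {u v : V} {p : List (V × ℕ × V)}
    (h : IsPath D u v p) : ∀ e ∈ p, e ∈ D.E := by
  induction p generalizing u with
  | nil => simp
  | cons e p ih =>
      intro f hf
      rcases List.mem_cons.1 hf with rfl | hf
      · exact h.1
      · exact ih h.2.2 f hf

lemma not_nodup_decomp {α : Type*} (l : List α) (h : ¬ l.Nodup) :
    ∃ a l₁ l₂ l₃, l = (l₁ ++ a :: l₂) ++ a :: l₃ := by
  induction l with
  | nil => simp at h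
  | cons x xs ih =>
      rw [List.nodup_cons] at h
      push_neg at h
      by_cases hx : x ∈ xs
      · obtain ⟨s, t, rfl⟩ := List.append_of_mem hx
        exact ⟨x, [], s, t, by simp⟩
      · obtain ⟨a, l₁, l₂, l₃, rfl⟩ := ih (h hx)
        exact ⟨a, x :: l₁, l₂, l₃, by simp⟩

lemma isPath_nodup (hacyc : ∀ v (p : List (V × ℕ × V)), p ≠ [] → ¬ IsPath D v v p)
    {u v : V} {p : List (V × ℕ × V)} (h : IsPath D u v p) : p.Nodup := by
  by_contra hnd
  obtain ⟨e, l₁, l₂, l₃, rfl⟩ := not_nodup_decomp p hnd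
  obtain ⟨m, hm1, hm2⟩ := isPath_split (p := l₁ ++ e :: l₂) h
  obtain ⟨n, hn1, hn2⟩ := isPath_split (p := l₁) hm1
  have hem : e.1 = m := hm2.2.1
  have hen : e.1 = n := hn2.2.1
  have : IsPath D e.1 e.1 (e :: l₂) := ⟨hn2.1, rfl, by
    have h5 := hn2.2.2
    rwa [← hem] at h5⟩
  exact hacyc e.1 (e :: l₂) (by simp) this

lemma paths_finite (hacyc : ∀ v (p : List (V × ℕ × V)), p ≠ [] → ¬ IsPath D v v p)
    (u v : V) : {p : List (V × ℕ × V) | IsPath D u v p}.Finite := by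
  have hsub : {p : List (V × ℕ × V) | IsPath D u v p} ⊆
      (fun l : List D.E => l.map Subtype.val) '' {l | l.length ≤ D.E.card} := by
    intro p hp
    refine ⟨p.pmap (fun e he => (⟨e, he⟩ : D.E)) (isPath_mem_E hp), ?_, ?_⟩
    · have hnd : p.Nodup := isPath_nodup hacyc hp
      have h1 : p.toFinset.card = p.length := List.toFinset_card_of_nodup hnd
      have h2 : p.toFinset ⊆ D.E := fun e he => isPath_mem_E hp e (List.mem_toFinset.1 he)
      have h3 := Finset.card_le_card h2
      simp only [Set.mem_setOf_eq, List.length_pmap]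
      omega
    · simp [List.map_pmap, List.pmap_eq_map]
  exact ((List.finite_length_le _ _).image _).subset hsub

end Aux

namespace Aux

variable {D : MultiDAG V}

lemma pathCount_self (hacyc : ∀ v (p : List (V × ℕ × V)), p ≠ [] → ¬ IsPath D v v p)
    (u : V) : pathCount D u u = 1 := by
  have hs : {p : List (V × ℕ × V) | IsPath D u u p} = {[]} := by
    ext p
    simp only [Set.mem_setOf_eq, Set.mem_singleton_iff]
    constructor
    · intro hp; by_contra h; exact hacyc u p h hp
    · rintro rfl; rfl
  rw [pathCount, hs]; simp

lemma pathCountW_sink {w : V} (hw : IsSink D w) : pathCountW D w = 1 := by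
  have hs : {p : List (V × ℕ × V) | ∃ w', IsSink D w' ∧ IsPath D w w' p} = {[]} := by
    ext p
    simp only [Set.mem_setOf_eq, Set.mem_singleton_iff]
    constructor
    · rintro ⟨w', hw', hp⟩
      cases p with
      | nil => rfl
      | cons e q => exact absurd hp.2.1 (hw e hp.1)
    · rintro rfl; exact ⟨w, hw, rfl⟩
  rw [pathCountW, hs]; simp

lemma pathsW_finite [Fintype V]
    (hacyc : ∀ v (p : List (V × ℕ × V)), p ≠ [] → ¬ IsPath D v v p) (v : V) :
    {p : List (V × ℕ × V) | ∃ w, IsSink D w ∧ IsPath D v w p}.Finite := by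
  refine (Set.finite_iUnion (fun w => paths_finite hacyc v w)).subset ?_
  rintro p ⟨w, -, hp⟩
  exact Set.mem_iUnion.2 ⟨w, hp⟩

lemma pathCount_le_left [Fintype V]
    (hacyc : ∀ v (p : List (V × ℕ × V)), p ≠ [] → ¬ IsPath D v v p)
    {e : V × ℕ × V} (he : e ∈ D.E) (r : V) :
    pathCount D r e.1 ≤ pathCount D r e.2.2 := by
  refine Set.ncard_le_ncard_of_injOn (fun p => p ++ [e])
    (fun p hp => isPath_append hp ⟨he, rfl, rfl⟩) ?_ (paths_finite hacyc r e.2.2)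
  intro p _ q _ h
  simpa using h

lemma pathCountW_le [Fintype V]
    (hacyc : ∀ v (p : List (V × ℕ × V)), p ≠ [] → ¬ IsPath D v v p)
    {e : V × ℕ × V} (he : e ∈ D.E) :
    pathCountW D e.2.2 ≤ pathCountW D e.1 := by
  refine Set.ncard_le_ncard_of_injOn (fun p => e :: p) ?_ ?_ (pathsW_finite hacyc e.1)
  · rintro p ⟨w, hw, hp⟩
    exact ⟨w, hw, he, rfl, hp⟩
  · intro p _ q _ h
    simpa using h

lemma pathCount_sink_le [Fintype V]
    (hacyc : ∀ v (p : List (V × ℕ × V)), p ≠ [] → ¬ IsPath D v v p)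
    {w : V} (hw : IsSink D w) (r : V) :
    pathCount D r w ≤ pathCountW D r :=
  Set.ncard_le_ncard (fun p hp => ⟨w, hw, hp⟩) (pathsW_finite hacyc r)

open scoped Classical in
lemma count_bound [Fintype V]
    (hacyc : ∀ v (p : List (V × ℕ × V)), p ≠ [] → ¬ IsPath D v v p) (r : V) :
    ∀ (p : List (V × ℕ × V)) (u v : V), IsPath D u v p →
      (p.filter fun e => decide (lam D r e.1 ≠ lam D r e.2.2)).length
        + (lam D r u).1 + (lam D r v).2 ≤ (lam D r v).1 + (lam D r u).2 := by
  intro p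
  induction p with
  | nil =>
      intro u v h
      cases h
      simp
  | cons e q ih =>
      intro u v h
      obtain ⟨he, he1, hq⟩ := h
      have IH := ih e.2.2 v hq
      have m1 : (lam D r e.1).1 ≤ (lam D r e.2.2).1 :=
        show Nat.log 2 _ ≤ Nat.log 2 _ from Nat.log_mono_right (pathCount_le_left hacyc he r)
      have m2 : (lam D r e.2.2).2 ≤ (lam D r e.1).2 :=
        show Nat.log 2 _ ≤ Nat.log 2 _ from Nat.log_mono_right (pathCountW_le hacyc he)
      subst he1
      by_cases hch : lam D r e.1 = lam D r e.2.2
      · rw [List.filter_cons_of_neg (by simp [hch])]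
        have c1 : (lam D r e.1).1 = (lam D r e.2.2).1 := by rw [hch]
        have c2 : (lam D r e.1).2 = (lam D r e.2.2).2 := by rw [hch]
        omega
      · rw [List.filter_cons_of_pos (by simp [hch])]
        have hne : (lam D r e.1).1 ≠ (lam D r e.2.2).1 ∨
            (lam D r e.1).2 ≠ (lam D r e.2.2).2 := by
          by_contra hc
          push_neg at hc
          exact hch (Prod.ext hc.1 hc.2)
        simp only [List.length_cons]
        omega

end Aux


open scoped Classical in
/-- Every root-to-sink path of a finite rooted DAG `D` contains at most `2 log₂ n(D)` edges
`(u,i,v)` with `λ(u) ≠ λ(v)`, where `n(D) = π(r,W)`. -/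
theorem stmt6 [Fintype V] (D : MultiDAG V) (r : V)
    (hacyc : ∀ v (p : List (V × ℕ × V)), p ≠ [] → ¬ IsPath D v v p)
    (hreach : ∀ v, ∃ p, IsPath D r v p)
    (hroot : ∀ e ∈ D.E, e.2.2 ≠ r)
    (w : V) (p : List (V × ℕ × V)) (hw : IsSink D w) (hp : IsPath D r w p) :
    ((p.filter fun e => decide (lam D r e.1 ≠ lam D r e.2.2)).length : ℝ)
      ≤ 2 * Real.logb 2 (pathCountW D r) := by
  have key := Aux.count_bound hacyc r p r w hp
  have h1 : (lam D r r).1 = 0 := by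
    simp [lam, Aux.pathCount_self hacyc]
  have h2 : (lam D r w).2 = 0 := by
    simp [lam, Aux.pathCountW_sink hw]
  have h3 : (lam D r w).1 ≤ Nat.log 2 (pathCountW D r) :=
    show Nat.log 2 _ ≤ Nat.log 2 _ from Nat.log_mono_right (Aux.pathCount_sink_le hacyc hw r)
  have h4 : (lam D r r).2 = Nat.log 2 (pathCountW D r) := rfl
  have hnat : (p.filter fun e => decide (lam D r e.1 ≠ lam D r e.2.2)).length
      ≤ 2 * Nat.log 2 (pathCountW D r) := by omega
  have hlog : (Nat.log 2 (pathCountW D r) : ℝ) ≤ Real.logb 2 (pathCountW D r) := by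
    have := Real.natLog_le_logb (pathCountW D r) 2
    simpa using this
  calc ((p.filter fun e => decide (lam D r e.1 ≠ lam D r e.2.2)).length : ℝ)
      ≤ ((2 * Nat.log 2 (pathCountW D r) : ℕ) : ℝ) := by exact_mod_cast hnat
    _ = 2 * (Nat.log 2 (pathCountW D r) : ℝ) := by push_cast; ring
    _ ≤ 2 * Real.logb 2 (pathCountW D r) := by linarith
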